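/- Linear algebra step of the breadth-one refinement: if ‖H'(ẑ)(ẑₑ−ẑ)‖ ≤ Cε², ‖∂H(ẑ)/∂z₁‖ ≤ C₁ε, ‖ẑₑ−ẑ‖ ≤ ε, and the submatrix [∂H(ẑ)/∂z₂,…,∂H(ẑ)/∂zₙ] has smallest singular value ≥ c > 0, then |ẑ_{i,e} − ẑᵢ| ≤ ((C + C₁)/c)·ε² for all 2 ≤ i ≤ n. -/

import Mathlib

open Matrix

/-- Linear algebra step of the breadth-one refinement: if `‖H'(ẑ)(ẑₑ−ẑ)‖ ≤ Cε²`,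
`‖∂H(ẑ)/∂z₁‖ ≤ C₁ε`, `‖ẑₑ−ẑ‖ ≤ ε`, and the submatrix `[∂H(ẑ)/∂z₂,…,∂H(ẑ)/∂zₙ]` has smallest
singular value `≥ c > 0`, then `|ẑ_{i,e} − ẑᵢ| ≤ ((C + C₁)/c) ε²` for all `2 ≤ i ≤ n`. -/
theorem breadth_one_componentwise_quadratic_bound {n : ℕ}
    (A : Matrix (Fin (n + 1)) (Fin (n + 1)) ℂ)  -- the Jacobian H'(ẑ)
    (z ze : Fin (n + 1) → ℂ) (ε C C₁ c : ℝ)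
    (hε : 0 < ε) (hC : 0 < C) (hC₁ : 0 < C₁) (hc : 0 < c)
    (hAd : Real.sqrt (∑ i, ‖(A *ᵥ (ze - z)) i‖ ^ 2) ≤ C * ε ^ 2)
    (hcol1 : Real.sqrt (∑ i, ‖A i 0‖ ^ 2) ≤ C₁ * ε)
    (hd : Real.sqrt (∑ i, ‖(ze - z) i‖ ^ 2) ≤ ε)
    (hsub : ∀ w : Fin (n + 1) → ℂ, w 0 = 0 →
        c * Real.sqrt (∑ i, ‖w i‖ ^ 2) ≤ Real.sqrt (∑ i, ‖(A *ᵥ w) i‖ ^ 2)) :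
    ∀ i, i ≠ 0 → ‖ze i - z i‖ ≤ ((C + C₁) / c) * ε ^ 2 := by
  set d : Fin (n+1) → ℂ := ze - z with hdDef
  set w : Fin (n+1) → ℂ := fun j => if j = 0 then 0 else d j with hwDef
  have hw0 : w 0 = 0 := by simp [hwDef]
  have hd0 : ‖d 0‖ ≤ ε := by
    have h1 : ‖d 0‖ ^ 2 ≤ ∑ i, ‖d i‖ ^ 2 :=
      Finset.single_le_sum (f := fun i => ‖d i‖ ^ 2) (fun i _ => sq_nonneg _)
        (Finset.mem_univ 0)
    calc ‖d 0‖ = Real.sqrt (‖d 0‖ ^ 2) := (Real.sqrt_sq (norm_nonneg _)).symm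
      _ ≤ Real.sqrt (∑ i, ‖d i‖ ^ 2) := Real.sqrt_le_sqrt h1
      _ ≤ ε := hd
  have hAw : ∀ i, (A *ᵥ w) i = (A *ᵥ d) i - d 0 * A i 0 := by
    intro i
    simp only [mulVec, dotProduct]
    rw [Fin.sum_univ_succ, Fin.sum_univ_succ]
    have hs : ∀ j : Fin n, w j.succ = d j.succ := by
      intro j; simp [hwDef, Fin.succ_ne_zero]
    simp only [hs, hw0, mul_zero, zero_add]
    ring
  -- norms in Euclidean space
  set X : EuclideanSpace ℂ (Fin (n+1)) := WithLp.toLp 2 (fun i => (A *ᵥ d) i) with hX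
  set Y : EuclideanSpace ℂ (Fin (n+1)) := WithLp.toLp 2 (fun i => A i 0) with hY
  have hXn : ‖X‖ ≤ C * ε ^ 2 := by rw [EuclideanSpace.norm_eq]; exact hAd
  have hYn : ‖Y‖ ≤ C₁ * ε := by rw [EuclideanSpace.norm_eq]; exact hcol1
  have hAwE : (WithLp.toLp 2 (fun i => (A *ᵥ w) i) : EuclideanSpace ℂ (Fin (n+1))) = (X - d 0 • Y : EuclideanSpace ℂ (Fin (n+1))) := by
    ext i
    simp only [hAw, hX, hY, PiLp.sub_apply, PiLp.smul_apply, smul_eq_mul, PiLp.toLp_apply]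
  have hAwn : Real.sqrt (∑ i, ‖(A *ᵥ w) i‖ ^ 2) ≤ (C + C₁) * ε ^ 2 := by
    have : Real.sqrt (∑ i, ‖(A *ᵥ w) i‖ ^ 2)
        = ‖(X - d 0 • Y : EuclideanSpace ℂ (Fin (n+1)))‖ := by
      rw [EuclideanSpace.norm_eq, ← hAwE]
    rw [this]
    calc ‖(X - d 0 • Y : EuclideanSpace ℂ (Fin (n+1)))‖
        ≤ ‖X‖ + ‖d 0 • Y‖ := norm_sub_le _ _
      _ = ‖X‖ + ‖d 0‖ * ‖Y‖ := by rw [norm_smul]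
      _ ≤ C * ε ^ 2 + ε * (C₁ * ε) := by
          gcongr
      _ = (C + C₁) * ε ^ 2 := by ring
  have hwn : Real.sqrt (∑ i, ‖w i‖ ^ 2) ≤ ((C + C₁) / c) * ε ^ 2 := by
    have h := (hsub w hw0).trans hAwn
    rw [div_mul_eq_mul_div, le_div_iff₀ hc, mul_comm]
    exact h
  intro i hi
  have hwi : ‖w i‖ = ‖ze i - z i‖ := by simp [hwDef, hi, hdDef]
  calc ‖ze i - z i‖ = ‖w i‖ := hwi.symm
    _ = Real.sqrt (‖w i‖ ^ 2) := (Real.sqrt_sq (norm_nonneg _)).symm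
    _ ≤ Real.sqrt (∑ j, ‖w j‖ ^ 2) := Real.sqrt_le_sqrt
        (Finset.single_le_sum (f := fun j => ‖w j‖ ^ 2) (fun j _ => sq_nonneg _)
          (Finset.mem_univ i))
    _ ≤ ((C + C₁) / c) * ε ^ 2 := hwn
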